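/- Let A = ℕ × {0,1,2} carry the relations U₀ = ℕ×{0}, U₁ = ℕ×{1}, U₂ = ℕ×{2}, N = {(u,v) ∈ (ℕ×{1})² ∪ (ℕ×{2})² : u ≠ v}, and R = {((n,0),(n,1)) : n ∈ ℕ} ∪ {((n,0),(n,2)) : n ∈ ℕ} ∪ {((0,0),(n,1)) : n ∈ ℕ} ∪ {((0,0),(n,2)) : n ∈ ℕ}. Let C = (ℕ×{1,2}) ∪ {(0,0)} and let ℭ be C equipped with the restrictions of the five relations U₀, U₁, U₂, N, R to C. Then: (1) for every map e : C → C that preserves each of the five restricted relations and every finite subset F of C, there exists a bijection γ : C → C such that both γ and γ⁻¹ preserve the five restricted relations and e agrees with γ on F (ℭ is a model-complete core); and (2) the map h : A → C that fixes every element of ℕ×{1,2} and sends every element of ℕ×{0} to (0,0) preserves the five relations, so (A; U₀,U₁,U₂,N,R) and ℭ are homomorphically equivalent. -/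

import Mathlib

/-- The domain `ℕ × {0,1,2}`. -/
abbrev SpiderDom : Type := ℕ × Fin 3

/-- The relation `N`: pairs of distinct elements both in `ℕ×{1}` or both in `ℕ×{2}`. -/
def SpiderN (u v : SpiderDom) : Prop :=
  ((u.2 = 1 ∧ v.2 = 1) ∨ (u.2 = 2 ∧ v.2 = 2)) ∧ u ≠ v

/-- The relation `R`. -/
def SpiderR (u v : SpiderDom) : Prop :=
  (u.2 = 0 ∧ v.2 = 1 ∧ u.1 = v.1) ∨ (u.2 = 0 ∧ v.2 = 2 ∧ u.1 = v.1) ∨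
    (u = ((0 : ℕ), (0 : Fin 3)) ∧ v.2 = 1) ∨ (u = ((0 : ℕ), (0 : Fin 3)) ∧ v.2 = 2)

/-- The subset `C = (ℕ×{1,2}) ∪ {(0,0)}`. -/
def SpiderC : Set SpiderDom :=
  {p | p.2 = 1 ∨ p.2 = 2 ∨ p = ((0 : ℕ), (0 : Fin 3))}

/-- A homomorphism of the structure `ℭ` (the restriction of the five relations to `C`)
into itself: a map preserving each of the five restricted relations. -/
def IsHomCC (e : ↥SpiderC → ↥SpiderC) : Prop :=
  (∀ u : ↥SpiderC, (u : SpiderDom).2 = 0 → (e u : SpiderDom).2 = 0) ∧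
  (∀ u : ↥SpiderC, (u : SpiderDom).2 = 1 → (e u : SpiderDom).2 = 1) ∧
  (∀ u : ↥SpiderC, (u : SpiderDom).2 = 2 → (e u : SpiderDom).2 = 2) ∧
  (∀ u v : ↥SpiderC, SpiderN u v → SpiderN (e u) (e v)) ∧
  (∀ u v : ↥SpiderC, SpiderR u v → SpiderR (e u) (e v))

/-- A homomorphism from `(A; U₀,U₁,U₂,N,R)` to `ℭ`. -/
def IsHomAC (f : SpiderDom → ↥SpiderC) : Prop :=
  (∀ u : SpiderDom, u.2 = 0 → (f u : SpiderDom).2 = 0) ∧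
  (∀ u : SpiderDom, u.2 = 1 → (f u : SpiderDom).2 = 1) ∧
  (∀ u : SpiderDom, u.2 = 2 → (f u : SpiderDom).2 = 2) ∧
  (∀ u v : SpiderDom, SpiderN u v → SpiderN (f u) (f v)) ∧
  (∀ u v : SpiderDom, SpiderR u v → SpiderR (f u) (f v))

/-- A homomorphism from `ℭ` to `(A; U₀,U₁,U₂,N,R)`. -/
def IsHomCA (g : ↥SpiderC → SpiderDom) : Prop :=
  (∀ u : ↥SpiderC, (u : SpiderDom).2 = 0 → (g u).2 = 0) ∧
  (∀ u : ↥SpiderC, (u : SpiderDom).2 = 1 → (g u).2 = 1) ∧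
  (∀ u : ↥SpiderC, (u : SpiderDom).2 = 2 → (g u).2 = 2) ∧
  (∀ u v : ↥SpiderC, SpiderN u v → SpiderN (g u) (g v)) ∧
  (∀ u v : ↥SpiderC, SpiderR u v → SpiderR (g u) (g v))

theorem mem_SpiderC_of_ne (p : SpiderDom) (h : p.2 ≠ 0) : p ∈ SpiderC := by
  rcases p with ⟨n, m⟩
  fin_cases m
  · simp at h
  · exact Or.inl rfl
  · exact Or.inr (Or.inl rfl)

/-- The map `h : A → C` fixing `ℕ×{1,2}` pointwise and collapsing `ℕ×{0}` to `(0,0)`. -/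
noncomputable def spiderCollapse (p : SpiderDom) : ↥SpiderC :=
  if h : p.2 = 0 then ⟨((0 : ℕ), (0 : Fin 3)), Or.inr (Or.inr rfl)⟩
  else ⟨p, mem_SpiderC_of_ne p h⟩

/-- (1) `ℭ` is a model-complete core: every endomorphism agrees on each finite set with an
automorphism; and (2) the collapsing map is a homomorphism `𝔄 → ℭ`, and `𝔄` and `ℭ` are
homomorphically equivalent. -/

lemma exists_perm_extend (f : ℕ → ℕ) (hf : Function.Injective f) (s : Finset ℕ) :
    ∃ π : Equiv.Perm ℕ, ∀ n ∈ s, π n = f n := by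
  classical
  have hSfin : (↑s : Set ℕ).Finite := s.finite_toSet
  have hTfin : (f '' ↑s).Finite := hSfin.image f
  haveI : Infinite ↥((↑s : Set ℕ)ᶜ) := Set.infinite_coe_iff.mpr hSfin.infinite_compl
  haveI : Infinite ↥((f '' ↑s)ᶜ) := Set.infinite_coe_iff.mpr hTfin.infinite_compl
  obtain ⟨d1⟩ := nonempty_denumerable ↥((↑s : Set ℕ)ᶜ)
  obtain ⟨d2⟩ := nonempty_denumerable ↥((f '' ↑s)ᶜ)
  let e : (↑s : Set ℕ) ≃ (f '' ↑s) := Equiv.Set.image f ↑s hf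
  let ec : ↥((↑s : Set ℕ)ᶜ) ≃ ↥((f '' ↑s)ᶜ) :=
    (@Denumerable.eqv _ d1).trans (@Denumerable.eqv _ d2).symm
  obtain ⟨π, hπ⟩ := (Equiv.Set.compl e).symm ec
  refine ⟨π, fun n hn => ?_⟩
  have := hπ ⟨n, by exact_mod_cast hn⟩
  simpa [e, Equiv.Set.image, Equiv.Set.imageOfInjOn] using this

def pApply (π₁ π₂ : Equiv.Perm ℕ) (x : ↥SpiderC) : ↥SpiderC :=
  if (x : SpiderDom).2 = 1 then ⟨(π₁ (x : SpiderDom).1, 1), Or.inl rfl⟩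
  else if (x : SpiderDom).2 = 2 then ⟨(π₂ (x : SpiderDom).1, 2), Or.inr (Or.inl rfl)⟩
  else ⟨((0 : ℕ), (0 : Fin 3)), Or.inr (Or.inr rfl)⟩

lemma pApply_leftInv (π₁ π₂ : Equiv.Perm ℕ) (x : ↥SpiderC) :
    pApply π₁⁻¹ π₂⁻¹ (pApply π₁ π₂ x) = x := by
  obtain ⟨⟨n, i⟩, hx⟩ := x
  rcases hx with h | h | h
  · simp only at h; subst h
    apply Subtype.ext; simp [pApply]
  · simp only at h; subst h
    apply Subtype.ext; simp [pApply]
  · have h1 : n = 0 := congrArg Prod.fst h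
    have h2 : i = 0 := congrArg Prod.snd h
    subst h1; subst h2
    apply Subtype.ext; simp [pApply]

def spiderPerm (π₁ π₂ : Equiv.Perm ℕ) : ↥SpiderC ≃ ↥SpiderC where
  toFun := pApply π₁ π₂
  invFun := pApply π₁⁻¹ π₂⁻¹
  left_inv := pApply_leftInv π₁ π₂
  right_inv := fun x => by
    have := pApply_leftInv π₁⁻¹ π₂⁻¹ x
    simpa using this

lemma isHomCC_pApply (π₁ π₂ : Equiv.Perm ℕ) : IsHomCC (pApply π₁ π₂) := by
  have hval : ∀ x : ↥SpiderC,
      ((x : SpiderDom).2 = 1 ∧ (pApply π₁ π₂ x : SpiderDom) = (π₁ (x : SpiderDom).1, 1)) ∨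
      ((x : SpiderDom).2 = 2 ∧ (pApply π₁ π₂ x : SpiderDom) = (π₂ (x : SpiderDom).1, 2)) ∨
      ((x : SpiderDom) = ((0:ℕ), (0:Fin 3)) ∧
        (pApply π₁ π₂ x : SpiderDom) = ((0:ℕ), (0:Fin 3))) := by
    intro x
    obtain ⟨⟨n, i⟩, hx⟩ := x
    rcases hx with h | h | h
    · exact Or.inl ⟨h, by simp only at h; subst h; simp [pApply]⟩
    · exact Or.inr (Or.inl ⟨h, by simp only at h; subst h; simp [pApply]⟩)
    · refine Or.inr (Or.inr ⟨h, ?_⟩)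
      have h2 : i = 0 := congrArg Prod.snd h
      have h1 : n = 0 := congrArg Prod.fst h
      subst h1; subst h2; simp [pApply]
  refine ⟨?_, ?_, ?_, ?_, ?_⟩
  · intro u hu
    rcases hval u with ⟨h, _⟩ | ⟨h, _⟩ | ⟨_, h⟩
    · rw [hu] at h; exact absurd h (by decide)
    · rw [hu] at h; exact absurd h (by decide)
    · rw [h]
  · intro u hu
    rcases hval u with ⟨_, h⟩ | ⟨h, _⟩ | ⟨h, _⟩
    · rw [h]
    · rw [hu] at h; exact absurd h (by decide)
    · rw [h] at hu; exact absurd hu (by decide)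
  · intro u hu
    rcases hval u with ⟨h, _⟩ | ⟨_, h⟩ | ⟨h, _⟩
    · rw [hu] at h; exact absurd h (by decide)
    · rw [h]
    · rw [h] at hu; exact absurd hu (by decide)
  · intro u v ⟨htyp, hne⟩
    rcases htyp with ⟨hu, hv⟩ | ⟨hu, hv⟩
    · rcases hval u with ⟨_, h1⟩ | ⟨h, _⟩ | ⟨h, _⟩
      · rcases hval v with ⟨_, h2⟩ | ⟨h', _⟩ | ⟨h', _⟩
        · refine ⟨Or.inl ⟨by rw [h1], by rw [h2]⟩, ?_⟩
          rw [h1, h2]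
          intro heq
          have : π₁ (u : SpiderDom).1 = π₁ (v : SpiderDom).1 := congrArg Prod.fst heq
          have hfst : (u : SpiderDom).1 = (v : SpiderDom).1 := π₁.injective this
          apply hne
          exact Prod.ext hfst (hu.trans hv.symm)
        · rw [hv] at h'; exact absurd h' (by decide)
        · rw [h'] at hv; exact absurd hv (by decide)
      · rw [hu] at h; exact absurd h (by decide)
      · rw [h] at hu; exact absurd hu (by decide)
    · rcases hval u with ⟨h, _⟩ | ⟨_, h1⟩ | ⟨h, _⟩
      · rw [hu] at h; exact absurd h (by decide)
      · rcases hval v with ⟨h', _⟩ | ⟨_, h2⟩ | ⟨h', _⟩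
        · rw [hv] at h'; exact absurd h' (by decide)
        · refine ⟨Or.inr ⟨by rw [h1], by rw [h2]⟩, ?_⟩
          rw [h1, h2]
          intro heq
          have : π₂ (u : SpiderDom).1 = π₂ (v : SpiderDom).1 := congrArg Prod.fst heq
          have hfst : (u : SpiderDom).1 = (v : SpiderDom).1 := π₂.injective this
          apply hne
          exact Prod.ext hfst (hu.trans hv.symm)
        · rw [h'] at hv; exact absurd hv (by decide)
      · rw [h] at hu; exact absurd hu (by decide)
  · intro u v hR
    have hu0 : (u : SpiderDom) = ((0:ℕ), (0:Fin 3)) := by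
      rcases hR with ⟨h, _, _⟩ | ⟨h, _, _⟩ | ⟨h, _⟩ | ⟨h, _⟩
      · rcases u.2 with h' | h' | h'
        · rw [h] at h'; exact absurd h' (by decide)
        · rw [h] at h'; exact absurd h' (by decide)
        · exact h'
      · rcases u.2 with h' | h' | h'
        · rw [h] at h'; exact absurd h' (by decide)
        · rw [h] at h'; exact absurd h' (by decide)
        · exact h'
      · exact h
      · exact h
    have hv12 : (v : SpiderDom).2 = 1 ∨ (v : SpiderDom).2 = 2 := by
      rcases hR with ⟨_, h, _⟩ | ⟨_, h, _⟩ | ⟨_, h⟩ | ⟨_, h⟩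
      · exact Or.inl h
      · exact Or.inr h
      · exact Or.inl h
      · exact Or.inr h
    have hgu : (pApply π₁ π₂ u : SpiderDom) = ((0:ℕ), (0:Fin 3)) := by
      rcases hval u with ⟨h, _⟩ | ⟨h, _⟩ | ⟨_, h⟩
      · rw [hu0] at h; exact absurd h (by decide)
      · rw [hu0] at h; exact absurd h (by decide)
      · exact h
    rcases hv12 with hv | hv
    · refine Or.inr (Or.inr (Or.inl ⟨hgu, ?_⟩))
      rcases hval v with ⟨_, h⟩ | ⟨h, _⟩ | ⟨h, _⟩
      · rw [h]
      · rw [hv] at h; exact absurd h (by decide)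
      · rw [h] at hv; exact absurd hv (by decide)
    · refine Or.inr (Or.inr (Or.inr ⟨hgu, ?_⟩))
      rcases hval v with ⟨h, _⟩ | ⟨_, h⟩ | ⟨h, _⟩
      · rw [hv] at h; exact absurd h (by decide)
      · rw [h]
      · rw [h] at hv; exact absurd hv (by decide)

lemma spiderCollapse_val : ∀ p : SpiderDom,
    (p.2 = 0 ∧ (spiderCollapse p : SpiderDom) = ((0:ℕ), (0:Fin 3))) ∨
    (p.2 ≠ 0 ∧ (spiderCollapse p : SpiderDom) = p) := by
  intro p
  by_cases h : p.2 = 0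
  · exact Or.inl ⟨h, by simp [spiderCollapse, h]⟩
  · exact Or.inr ⟨h, by simp [spiderCollapse, h]⟩

lemma isHomAC_collapse : IsHomAC spiderCollapse := by
  refine ⟨?_, ?_, ?_, ?_, ?_⟩
  · intro u hu
    rcases spiderCollapse_val u with ⟨_, h⟩ | ⟨h, _⟩
    · rw [h]
    · exact absurd hu h
  · intro u hu
    rcases spiderCollapse_val u with ⟨h, _⟩ | ⟨_, h⟩
    · rw [hu] at h; exact absurd h (by decide)
    · rw [h]; exact hu
  · intro u hu
    rcases spiderCollapse_val u with ⟨h, _⟩ | ⟨_, h⟩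
    · rw [hu] at h; exact absurd h (by decide)
    · rw [h]; exact hu
  · intro u v ⟨htyp, hne⟩
    have hu : u.2 ≠ 0 := by
      rcases htyp with ⟨h, _⟩ | ⟨h, _⟩ <;> rw [h] <;> decide
    have hv : v.2 ≠ 0 := by
      rcases htyp with ⟨_, h⟩ | ⟨_, h⟩ <;> rw [h] <;> decide
    have h1 : (spiderCollapse u : SpiderDom) = u := by
      rcases spiderCollapse_val u with ⟨h, _⟩ | ⟨_, h⟩
      · exact absurd h hu
      · exact h
    have h2 : (spiderCollapse v : SpiderDom) = v := by
      rcases spiderCollapse_val v with ⟨h, _⟩ | ⟨_, h⟩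
      · exact absurd h hv
      · exact h
    rw [SpiderN, h1, h2]; exact ⟨htyp, hne⟩
  · intro u v hR
    have hu : (spiderCollapse u : SpiderDom) = ((0:ℕ), (0:Fin 3)) := by
      have hu0 : u.2 = 0 := by
        rcases hR with ⟨h, _, _⟩ | ⟨h, _, _⟩ | ⟨h, _⟩ | ⟨h, _⟩
        · exact h
        · exact h
        · rw [h]
        · rw [h]
      rcases spiderCollapse_val u with ⟨_, h⟩ | ⟨h, _⟩
      · exact h
      · exact absurd hu0 h
    have hv12 : v.2 = 1 ∨ v.2 = 2 := by
      rcases hR with ⟨_, h, _⟩ | ⟨_, h, _⟩ | ⟨_, h⟩ | ⟨_, h⟩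
      · exact Or.inl h
      · exact Or.inr h
      · exact Or.inl h
      · exact Or.inr h
    have hv : (spiderCollapse v : SpiderDom) = v := by
      rcases spiderCollapse_val v with ⟨h, _⟩ | ⟨_, h⟩
      · rcases hv12 with h' | h' <;> (rw [h'] at h; exact absurd h (by decide))
      · exact h
    rcases hv12 with h' | h'
    · exact Or.inr (Or.inr (Or.inl ⟨hu, by rw [hv]; exact h'⟩))
    · exact Or.inr (Or.inr (Or.inr ⟨hu, by rw [hv]; exact h'⟩))

theorem spider_core :
    (∀ e : ↥SpiderC → ↥SpiderC, IsHomCC e → ∀ F : Finset ↥SpiderC,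
      ∃ γ : ↥SpiderC ≃ ↥SpiderC, IsHomCC γ ∧ IsHomCC γ.symm ∧ ∀ x ∈ F, e x = γ x) ∧
    IsHomAC spiderCollapse ∧
    (∃ f : SpiderDom → ↥SpiderC, IsHomAC f) ∧ (∃ g : ↥SpiderC → SpiderDom, IsHomCA g) := by
  classical
  refine ⟨?_, isHomAC_collapse, ⟨spiderCollapse, isHomAC_collapse⟩,
    ⟨Subtype.val, fun _ h => h, fun _ h => h, fun _ h => h, fun _ _ h => h, fun _ _ h => h⟩⟩
  intro e he F
  obtain ⟨h0, h1, h2, hN, hR⟩ := he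
  set f₁ : ℕ → ℕ := fun n => (e ⟨(n, (1 : Fin 3)), Or.inl rfl⟩ : SpiderDom).1 with hf₁
  set f₂ : ℕ → ℕ := fun n => (e ⟨(n, (2 : Fin 3)), Or.inr (Or.inl rfl)⟩ : SpiderDom).1 with hf₂
  have inj₁ : Function.Injective f₁ := by
    intro m n h
    by_contra hmn
    have hNe := hN ⟨(m, (1:Fin 3)), Or.inl rfl⟩ ⟨(n, (1:Fin 3)), Or.inl rfl⟩
      ⟨Or.inl ⟨rfl, rfl⟩, fun heq => hmn (congrArg Prod.fst heq)⟩
    exact hNe.2 (Prod.ext h ((h1 _ rfl).trans (h1 _ rfl).symm))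
  have inj₂ : Function.Injective f₂ := by
    intro m n h
    by_contra hmn
    have hNe := hN ⟨(m, (2:Fin 3)), Or.inr (Or.inl rfl)⟩ ⟨(n, (2:Fin 3)), Or.inr (Or.inl rfl)⟩
      ⟨Or.inr ⟨rfl, rfl⟩, fun heq => hmn (congrArg Prod.fst heq)⟩
    exact hNe.2 (Prod.ext h ((h2 _ rfl).trans (h2 _ rfl).symm))
  obtain ⟨π₁, hπ₁⟩ := exists_perm_extend f₁ inj₁
    ((F.filter (fun x => x.val.2 = 1)).image (fun x => x.val.1))
  obtain ⟨π₂, hπ₂⟩ := exists_perm_extend f₂ inj₂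
    ((F.filter (fun x => x.val.2 = 2)).image (fun x => x.val.1))
  refine ⟨spiderPerm π₁ π₂, isHomCC_pApply π₁ π₂, isHomCC_pApply π₁⁻¹ π₂⁻¹, ?_⟩
  intro x hxF
  rcases x.2 with h | h | h
  · have hx : x = ⟨((x : SpiderDom).1, (1 : Fin 3)), Or.inl rfl⟩ := Subtype.ext (Prod.ext rfl h)
    have hmem : (x : SpiderDom).1 ∈
        (F.filter (fun y => y.val.2 = 1)).image (fun y => y.val.1) :=
      Finset.mem_image.mpr ⟨x, Finset.mem_filter.mpr ⟨hxF, h⟩, rfl⟩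
    have hπ : π₁ (x : SpiderDom).1 = f₁ (x : SpiderDom).1 := hπ₁ _ hmem
    have he' : (e x : SpiderDom) = (f₁ (x : SpiderDom).1, (1 : Fin 3)) := by
      refine Prod.ext ?_ (h1 x h)
      conv_lhs => rw [hx]
    have hg : (spiderPerm π₁ π₂ x : SpiderDom) = (f₁ (x : SpiderDom).1, (1 : Fin 3)) := by
      show (pApply π₁ π₂ x : SpiderDom) = _
      simp [pApply, h, hπ]
    exact Subtype.ext (he'.trans hg.symm)
  · have hx : x = ⟨((x : SpiderDom).1, (2 : Fin 3)), Or.inr (Or.inl rfl)⟩ :=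
      Subtype.ext (Prod.ext rfl h)
    have hmem : (x : SpiderDom).1 ∈
        (F.filter (fun y => y.val.2 = 2)).image (fun y => y.val.1) :=
      Finset.mem_image.mpr ⟨x, Finset.mem_filter.mpr ⟨hxF, h⟩, rfl⟩
    have hπ : π₂ (x : SpiderDom).1 = f₂ (x : SpiderDom).1 := hπ₂ _ hmem
    have he' : (e x : SpiderDom) = (f₂ (x : SpiderDom).1, (2 : Fin 3)) := by
      refine Prod.ext ?_ (h2 x h)
      conv_lhs => rw [hx]
    have hg : (spiderPerm π₁ π₂ x : SpiderDom) = (f₂ (x : SpiderDom).1, (2 : Fin 3)) := by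
      show (pApply π₁ π₂ x : SpiderDom) = _
      have h' : ¬ ((x : SpiderDom).2 = 1) := by rw [h]; decide
      simp [pApply, h, h', hπ]
    exact Subtype.ext (he'.trans hg.symm)
  · have he0 : (e x : SpiderDom).2 = 0 := h0 x (by rw [h])
    have he' : (e x : SpiderDom) = ((0:ℕ), (0:Fin 3)) := by
      rcases (e x).2 with h' | h' | h'
      · rw [he0] at h'; exact absurd h' (by decide)
      · rw [he0] at h'; exact absurd h' (by decide)
      · exact h'
    have hg : (spiderPerm π₁ π₂ x : SpiderDom) = ((0:ℕ), (0:Fin 3)) := by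
      show (pApply π₁ π₂ x : SpiderDom) = _
      simp [pApply, h]
    exact Subtype.ext (he'.trans hg.symm)
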